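/- Let X be integrable with mean μ, continuous strictly increasing cdf, and let α ∈ (0,1/2). Then ((1−2α)/(1−α))·E|X−μ| < e_X(1−α) − e_X(α) < ((1−2α)/α)·E|X−μ|. -/

import Mathlib

open MeasureTheory Set

/-- The first-order condition identifying the `α`-expectile of a distribution `P` on `ℝ`. -/
def IsExpectile (P : Measure ℝ) (α t : ℝ) : Prop :=
  α * ∫ x, max (x - t) 0 ∂P = (1 - α) * ∫ x, max (t - x) 0 ∂P

section Aux

variable (P : Measure ℝ) [IsProbabilityMeasure P]

lemma intPos (hInt : Integrable id P) (t : ℝ) :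
    Integrable (fun x => max (x - t) 0) P :=
  (hInt.sub (integrable_const t)).pos_part

lemma intNeg (hInt : Integrable id P) (t : ℝ) :
    Integrable (fun x => max (t - x) 0) P :=
  ((integrable_const t).sub hInt).pos_part

lemma gdiff (hInt : Integrable id P) (t : ℝ) :
    (∫ x, max (x - t) 0 ∂P) - (∫ x, max (t - x) 0 ∂P) = (∫ x, x ∂P) - t := by
  have hInt' : Integrable (fun x : ℝ => x) P := hInt
  rw [← integral_sub (intPos P hInt t) (intNeg P hInt t)]
  have h : (fun x : ℝ => max (x - t) 0 - max (t - x) 0) = fun x : ℝ => x - t := by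
    funext x
    rcases le_total x t with h | h
    · rw [max_eq_right (by linarith), max_eq_left (by linarith)]; ring
    · rw [max_eq_left (by linarith), max_eq_right (by linarith)]; ring
  rw [h, integral_sub hInt' (integrable_const t), integral_const]
  simp

lemma gm_gap (hInt : Integrable id P) {s t : ℝ} (hst : s ≤ t) :
    (∫ x, max (s - x) 0 ∂P) + (t - s) * (P (Iic s)).toReal ≤ ∫ x, max (t - x) 0 ∂P := by
  have hind : Integrable ((Iic s).indicator (fun _ : ℝ => t - s)) P :=
    (integrable_const (t - s)).indicator measurableSet_Iic
  have hpt : ∀ x : ℝ, max (s - x) 0 + (Iic s).indicator (fun _ => t - s) x ≤ max (t - x) 0 := by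
    intro x
    by_cases hx : x ∈ Iic s
    · simp only [indicator_of_mem hx]
      rw [max_eq_left (by simp at hx; linarith), max_eq_left (by simp at hx; linarith)]
      simp at hx; linarith
    · simp only [indicator_of_notMem hx, add_zero]
      exact max_le_max (by simp at hx; linarith) le_rfl
  have h := integral_mono ((intNeg P hInt s).add hind) (intNeg P hInt t) hpt
  simp only [Pi.add_apply] at h
  rw [integral_add (intNeg P hInt s) hind, integral_indicator_const _ measurableSet_Iic] at h
  simpa [smul_eq_mul, mul_comm, Measure.real] using h

lemma gp_gap (hInt : Integrable id P) {s t : ℝ} (hst : s ≤ t) :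
    (∫ x, max (x - t) 0 ∂P) + (t - s) * (P (Ici t)).toReal ≤ ∫ x, max (x - s) 0 ∂P := by
  have hind : Integrable ((Ici t).indicator (fun _ : ℝ => t - s)) P :=
    (integrable_const (t - s)).indicator measurableSet_Ici
  have hpt : ∀ x : ℝ, max (x - t) 0 + (Ici t).indicator (fun _ => t - s) x ≤ max (x - s) 0 := by
    intro x
    by_cases hx : x ∈ Ici t
    · simp only [indicator_of_mem hx]
      rw [max_eq_left (by simp at hx; linarith), max_eq_left (by simp at hx; linarith)]
      linarith
    · simp only [indicator_of_notMem hx, add_zero]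
      exact max_le_max (by simp at hx; linarith) le_rfl
  have h := integral_mono ((intPos P hInt t).add hind) (intPos P hInt s) hpt
  simp only [Pi.add_apply] at h
  rw [integral_add (intPos P hInt t) hind, integral_indicator_const _ measurableSet_Ici] at h
  simpa [smul_eq_mul, mul_comm, Measure.real] using h

lemma F_pos (hmono : StrictMono fun t : ℝ => (P (Iic t)).toReal) (s : ℝ) :
    0 < (P (Iic s)).toReal :=
  lt_of_le_of_lt ENNReal.toReal_nonneg (hmono (show s - 1 < s by linarith))

lemma G_pos (hmono : StrictMono fun t : ℝ => (P (Iic t)).toReal) (t : ℝ) :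
    0 < (P (Ici t)).toReal := by
  have h1 : (P (Iic t)).toReal < 1 := by
    have h0 := hmono (show t < t + 1 by linarith)
    dsimp only at h0
    have h2 : (P (Iic (t + 1))).toReal ≤ 1 := by
      have := ENNReal.toReal_mono ENNReal.one_ne_top (prob_le_one (μ := P) (s := Iic (t + 1)))
      simpa using this
    linarith
  have hcover : (1 : ENNReal) ≤ P (Iic t) + P (Ici t) := by
    calc (1 : ENNReal) = P Set.univ := (measure_univ).symm
      _ = P (Iic t ∪ Ici t) := by rw [Iic_union_Ici]
      _ ≤ P (Iic t) + P (Ici t) := measure_union_le _ _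
  have hcr : (1 : ℝ) ≤ (P (Iic t)).toReal + (P (Ici t)).toReal := by
    have := ENNReal.toReal_mono
      (ENNReal.add_ne_top.mpr ⟨measure_ne_top P _, measure_ne_top P _⟩) hcover
    rwa [ENNReal.toReal_one, ENNReal.toReal_add (measure_ne_top P _) (measure_ne_top P _)] at this
  linarith

lemma eq_dirac_of_ae (c : ℝ) (h : ∀ᵐ x ∂P, x = c) : P = Measure.dirac c := by
  have hnull : P {x : ℝ | ¬ x = c} = 0 := by
    rw [← ae_iff]; exact h
  ext s hs
  rw [Measure.dirac_apply' _ hs]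
  by_cases hc : c ∈ s
  · have hsub : sᶜ ⊆ {x : ℝ | ¬ x = c} := by
      intro x hx hxc
      exact hx (by rw [hxc]; exact hc)
    have hcomp : P sᶜ = 0 := measure_mono_null hsub hnull
    have := measure_add_measure_compl (μ := P) hs
    rw [hcomp, add_zero, measure_univ] at this
    simp [this, indicator_of_mem hc]
  · have hsub : s ⊆ {x : ℝ | ¬ x = c} := by
      intro x hx hxc
      exact hc (by rw [← hxc]; exact hx)
    have : P s = 0 := measure_mono_null hsub hnull
    simp [this, indicator_of_notMem hc]

lemma gp_mu_pos (hInt : Integrable id P) (hnd : ∀ c : ℝ, P ≠ Measure.dirac c)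
    (μ : ℝ) (hμ : μ = ∫ x, x ∂P) : 0 < ∫ x, max (x - μ) 0 ∂P := by
  rcases lt_or_ge 0 (∫ x, max (x - μ) 0 ∂P) with h | h
  · exact h
  exfalso
  have hz : ∫ x, max (x - μ) 0 ∂P = 0 :=
    le_antisymm h (integral_nonneg fun x => le_max_right _ _)
  have hae : ∀ᵐ x ∂P, max (x - μ) 0 = 0 := by
    have := (integral_eq_zero_iff_of_nonneg (fun x => le_max_right _ _)
      (intPos P hInt μ)).mp hz
    exact this
  have hle : ∀ᵐ x ∂P, x ≤ μ := by
    filter_upwards [hae] with x hx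
    by_contra hxg
    push_neg at hxg
    rw [max_eq_left (by linarith)] at hx
    linarith
  have hint2 : Integrable (fun x : ℝ => μ - x) P := (integrable_const μ).sub hInt
  have hInt' : Integrable (fun x : ℝ => x) P := hInt
  have hz2 : ∫ x, (μ - x) ∂P = 0 := by
    rw [integral_sub (integrable_const μ) hInt', integral_const]
    simp [← hμ]
  have hae2 : ∀ᵐ x ∂P, μ - x = 0 := by
    have := (integral_eq_zero_iff_of_nonneg_ae
      (by filter_upwards [hle] with x hx; dsimp; linarith) hint2).mp hz2
    filter_upwards [this] with x hx using hx
  exact hnd μ (eq_dirac_of_ae P μ (by filter_upwards [hae2] with x hx; linarith))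

lemma gm_mu_pos (hInt : Integrable id P) (hnd : ∀ c : ℝ, P ≠ Measure.dirac c)
    (μ : ℝ) (hμ : μ = ∫ x, x ∂P) : 0 < ∫ x, max (μ - x) 0 ∂P := by
  rcases lt_or_ge 0 (∫ x, max (μ - x) 0 ∂P) with h | h
  · exact h
  exfalso
  have hz : ∫ x, max (μ - x) 0 ∂P = 0 :=
    le_antisymm h (integral_nonneg fun x => le_max_right _ _)
  have hae : ∀ᵐ x ∂P, max (μ - x) 0 = 0 :=
    (integral_eq_zero_iff_of_nonneg (fun x => le_max_right _ _) (intNeg P hInt μ)).mp hz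
  have hle : ∀ᵐ x ∂P, μ ≤ x := by
    filter_upwards [hae] with x hx
    by_contra hxg
    push_neg at hxg
    rw [max_eq_left (by linarith)] at hx
    linarith
  have hint2 : Integrable (fun x : ℝ => x - μ) P := hInt.sub (integrable_const μ)
  have hInt' : Integrable (fun x : ℝ => x) P := hInt
  have hz2 : ∫ x, (x - μ) ∂P = 0 := by
    rw [integral_sub hInt' (integrable_const μ), integral_const]
    simp [← hμ]
  have hae2 : ∀ᵐ x ∂P, x - μ = 0 := by
    have := (integral_eq_zero_iff_of_nonneg_ae
      (by filter_upwards [hle] with x hx; dsimp; linarith) hint2).mp hz2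
    filter_upwards [this] with x hx using hx
  exact hnd μ (eq_dirac_of_ae P μ (by filter_upwards [hae2] with x hx; linarith))

lemma abs_int (hInt : Integrable id P) (μ : ℝ) :
    ∫ x, |x - μ| ∂P = (∫ x, max (x - μ) 0 ∂P) + ∫ x, max (μ - x) 0 ∂P := by
  rw [← integral_add (intPos P hInt μ) (intNeg P hInt μ)]
  congr 1
  funext x
  rcases le_total x μ with h | h
  · rw [abs_of_nonpos (by linarith), max_eq_right (by linarith), max_eq_left (by linarith)]; ring
  · rw [abs_of_nonneg (by linarith), max_eq_left (by linarith), max_eq_right (by linarith)]; ring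

end Aux

/-- for a non-degenerate integrable random variable with mean `μ` and
continuous strictly increasing cdf, and `α ∈ (0,1/2)`,
`((1−2α)/(1−α))·E|X−μ| < e_X(1−α) − e_X(α) < ((1−2α)/α)·E|X−μ|`. -/
theorem interexpectile_range_MAD_bounds
    (P : Measure ℝ) [IsProbabilityMeasure P] (hInt : Integrable id P)
    (hcont : Continuous fun t : ℝ => (P (Iic t)).toReal)
    (hmono : StrictMono fun t : ℝ => (P (Iic t)).toReal)
    (hnd : ∀ c : ℝ, P ≠ Measure.dirac c)
    (μ : ℝ) (hμ : μ = ∫ x, x ∂P)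
    (α : ℝ) (hα : α ∈ Ioo (0 : ℝ) (1 / 2))
    (eLo eHi : ℝ) (heLo : IsExpectile P α eLo) (heHi : IsExpectile P (1 - α) eHi) :
    (1 - 2 * α) / (1 - α) * ∫ x, |x - μ| ∂P < eHi - eLo ∧
    eHi - eLo < (1 - 2 * α) / α * ∫ x, |x - μ| ∂P := by
  obtain ⟨hα0, hα2⟩ := hα
  have h12 : 0 < 1 - 2 * α := by linarith
  have hα1 : 0 < 1 - α := by linarith
  unfold IsExpectile at heLo heHi
  have hdL := gdiff P hInt eLo
  have hdH := gdiff P hInt eHi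
  have hdM := gdiff P hInt μ
  rw [← hμ] at hdL hdH hdM
  -- expectile identities
  have hbeq : (1 - 2 * α) * (∫ x, max (eLo - x) 0 ∂P) = α * (μ - eLo) := by
    linear_combination α * hdL - heLo
  have haeq : (1 - 2 * α) * (∫ x, max (x - eLo) 0 ∂P) = (1 - α) * (μ - eLo) := by
    linear_combination (1 - α) * hdL - heLo
  have hceq : (1 - 2 * α) * (∫ x, max (x - eHi) 0 ∂P) = α * (eHi - μ) := by
    linear_combination heHi - α * hdH
  have hdeq : (1 - 2 * α) * (∫ x, max (eHi - x) 0 ∂P) = (1 - α) * (eHi - μ) := by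
    linear_combination heHi - (1 - α) * hdH
  have hgpμ := gp_mu_pos P hInt hnd μ hμ
  have hgmμ := gm_mu_pos P hInt hnd μ hμ
  -- eLo < μ
  have hLo : eLo < μ := by
    by_contra h
    push_neg at h
    have hg := gm_gap P hInt h
    have hF := F_pos P hmono μ
    nlinarith [mul_nonneg (sub_nonneg.mpr h) hF.le]
  -- μ < eHi
  have hHi : μ < eHi := by
    by_contra h
    push_neg at h
    have hg := gp_gap P hInt h
    have hG := G_pos P hmono μ
    nlinarith [mul_nonneg (sub_nonneg.mpr h) hG.le]
  -- strict monotonicity consequences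
  have hA : (∫ x, max (x - μ) 0 ∂P) < ∫ x, max (x - eLo) 0 ∂P := by
    have := gp_gap P hInt hLo.le
    nlinarith [G_pos P hmono μ, mul_pos (sub_pos.mpr hLo) (G_pos P hmono μ)]
  have hD : (∫ x, max (μ - x) 0 ∂P) < ∫ x, max (eHi - x) 0 ∂P := by
    have := gm_gap P hInt hHi.le
    nlinarith [mul_pos (sub_pos.mpr hHi) (F_pos P hmono μ)]
  have hB : (∫ x, max (eLo - x) 0 ∂P) < ∫ x, max (μ - x) 0 ∂P := by
    have := gm_gap P hInt hLo.le
    nlinarith [mul_pos (sub_pos.mpr hLo) (F_pos P hmono eLo)]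
  have hC : (∫ x, max (x - eHi) 0 ∂P) < ∫ x, max (x - μ) 0 ∂P := by
    have := gp_gap P hInt hHi.le
    nlinarith [mul_pos (sub_pos.mpr hHi) (G_pos P hmono eHi)]
  have hE := abs_int P hInt μ
  have key1 : (1 - α) * (eHi - eLo) =
      (1 - 2 * α) * ((∫ x, max (x - eLo) 0 ∂P) + ∫ x, max (eHi - x) 0 ∂P) := by
    linear_combination -haeq - hdeq
  have key2 : α * (eHi - eLo) =
      (1 - 2 * α) * ((∫ x, max (eLo - x) 0 ∂P) + ∫ x, max (x - eHi) 0 ∂P) := by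
    linear_combination -hbeq - hceq
  have hmul1 := mul_lt_mul_of_pos_left (add_lt_add hA hD) h12
  have hmul2 := mul_lt_mul_of_pos_left (add_lt_add hB hC) h12
  constructor
  · rw [div_mul_eq_mul_div, div_lt_iff₀ hα1, hE]
    linarith [hmul1, key1]
  · rw [div_mul_eq_mul_div, lt_div_iff₀ hα0, hE]
    linarith [hmul2, key2]
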